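/- Let f be a homogeneous cubic form in 6 variables over ℂ that can be written as f = ℓ_{1,1}ℓ_{1,2}ℓ_{1,3} + ℓ_{2,1}ℓ_{2,2}ℓ_{2,3} + ℓ_{3,1}ℓ_{3,2}ℓ_{3,3} + ℓ_{4,1}ℓ_{4,2}ℓ_{4,3} with each ℓ_{i,j} linear. Then there exist 27×27 matrices A_1, A_2, A_3 with linear entries such that A_1A_2A_3 = A_2A_3A_1 = A_3A_1A_2 = f·Id_{27}; in particular (A_1, A_2A_3) is a matrix factorization of f. -/

import Mathlib

open MvPolynomial

section BHhelpers

open Matrix Kronecker Finset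

set_option linter.unusedSectionVars false

variable {R : Type*} [CommRing R] {ι : Type*} [Fintype ι] [DecidableEq ι]

lemma bh_master (u v : ZMod 3 → ZMod 3) (r s : ZMod 3 → R) (P Q : ZMod 3 → Matrix ι ι R) :
    (∑ c : ZMod 3, Matrix.single c (u c) (r c) ⊗ₖ P c) *
      (∑ d : ZMod 3, Matrix.single d (v d) (s d) ⊗ₖ Q d) =
    ∑ c : ZMod 3, Matrix.single c (v (u c)) (r c * s (u c)) ⊗ₖ (P c * Q (u c)) := by
  rw [Finset.sum_mul_sum]
  refine Finset.sum_congr rfl fun c _ => ?_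
  rw [Finset.sum_eq_single (u c)]
  · rw [← mul_kronecker_mul, Matrix.single_mul_single_same]
  · intro d _ hd
    rw [← mul_kronecker_mul, Matrix.single_mul_single_of_ne (h := Ne.symm hd), zero_kronecker]
  · intro h; exact absurd (Finset.mem_univ _) h

lemma bh_sumE1 : (∑ c : ZMod 3, Matrix.single c c (1 : R) ⊗ₖ (1 : Matrix ι ι R)) = 1 := by
  ext ⟨p, i⟩ ⟨q, j⟩
  by_cases hpq : p = q
  · subst hpq
    by_cases hij : i = j
    · subst hij
      simp [Matrix.sum_apply, kroneckerMap_apply, Matrix.single, Matrix.one_apply]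
    · simp [Matrix.sum_apply, kroneckerMap_apply, Matrix.single, Matrix.one_apply,
        hij, Prod.mk.injEq]
  · simp [Matrix.sum_apply, kroneckerMap_apply, Matrix.single, Matrix.one_apply,
      hpq, Prod.mk.injEq]
    intro _
    rw [Finset.filter_false_of_mem, Finset.card_empty, Nat.cast_zero]
    rintro x - ⟨rfl, rfl⟩
    exact hpq rfl

lemma bh_sum_smul_one (M : R) :
    (∑ c : ZMod 3, Matrix.single c c M ⊗ₖ (1 : Matrix ι ι R)) = M • 1 := by
  have key : ∀ c : ZMod 3, Matrix.single c c M ⊗ₖ (1 : Matrix ι ι R)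
      = M • (Matrix.single c c (1 : R) ⊗ₖ (1 : Matrix ι ι R)) := by
    intro c
    rw [← Matrix.smul_kronecker, Matrix.smul_single, smul_eq_mul, mul_one]
  rw [Finset.sum_congr rfl fun c _ => key c, ← Finset.smul_sum, bh_sumE1]

noncomputable def Cmat (w m : ZMod 3 → R) (A : ZMod 3 → Matrix ι ι R) (t : ZMod 3) :
    Matrix (ZMod 3 × ι) (ZMod 3 × ι) R :=
  (∑ c : ZMod 3, Matrix.single c c (1 : R) ⊗ₖ A (c + t)) +
    w t • ∑ c : ZMod 3, Matrix.single c (c - 1) (m c) ⊗ₖ (1 : Matrix ι ι R)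

lemma Cmat_mul (w m : ZMod 3 → R) (f : R) (A : ZMod 3 → Matrix ι ι R)
    (hA : ∀ t, A t * A (t + 1) * A (t + 2) = f • 1)
    (hw0 : ∀ t, w t + w (t + 1) + w (t + 2) = 0)
    (hw2 : ∀ t, w t * w (t + 1) + (w t + w (t + 1)) * w (t + 2) = 0)
    (hw3 : ∀ t, w t * w (t + 1) * w (t + 2) = 1) (t : ZMod 3) :
    Cmat w m A t * Cmat w m A (t + 1) * Cmat w m A (t + 2)
      = (f + m 0 * m 1 * m 2) • 1 := by
  have hA' : ∀ c, A (c + t) * A (c + (t + 1)) * A (c + (t + 2)) = f • 1 := fun c => by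
    simpa [add_assoc] using hA (c + t)
  have hm : ∀ c : ZMod 3, m c * m (c - 1) * m (c - 2) = m 0 * m 1 * m 2 := by
    intro c
    fin_cases c
    · show m 0 * m (0 - 1) * m (0 - 2) = m 0 * m 1 * m 2
      rw [show (0 : ZMod 3) - 1 = 2 by decide, show (0 : ZMod 3) - 2 = 1 by decide]; ring
    · show m 1 * m (1 - 1) * m (1 - 2) = m 0 * m 1 * m 2
      rw [show (1 : ZMod 3) - 1 = 0 by decide, show (1 : ZMod 3) - 2 = 2 by decide]; ring
    · show m 2 * m (2 - 1) * m (2 - 2) = m 0 * m 1 * m 2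
      rw [show (2 : ZMod 3) - 1 = 1 by decide, show (2 : ZMod 3) - 2 = 0 by decide]; ring
  have h1 : (∑ c : ZMod 3, Matrix.single c c (1 : R) ⊗ₖ A (c + t)) *
      (∑ c : ZMod 3, Matrix.single c c (1 : R) ⊗ₖ A (c + (t + 1)))
      = ∑ c : ZMod 3, Matrix.single c c (1 : R) ⊗ₖ (A (c + t) * A (c + (t + 1))) :=
    (bh_master (fun c => c) (fun c => c) (fun _ => 1) (fun _ => 1) _ _).trans
      (Finset.sum_congr rfl fun c _ => by rw [mul_one])
  have h2 : (∑ c : ZMod 3, Matrix.single c c (1 : R) ⊗ₖ A (c + t)) *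
      (∑ c : ZMod 3, Matrix.single c (c - 1) (m c) ⊗ₖ (1 : Matrix ι ι R))
      = ∑ c : ZMod 3, Matrix.single c (c - 1) (m c) ⊗ₖ A (c + t) :=
    (bh_master (fun c => c) (fun c => c - 1) (fun _ => 1) m _ _).trans
      (Finset.sum_congr rfl fun c _ => by rw [one_mul, mul_one])
  have h3 : (∑ c : ZMod 3, Matrix.single c (c - 1) (m c) ⊗ₖ (1 : Matrix ι ι R)) *
      (∑ c : ZMod 3, Matrix.single c c (1 : R) ⊗ₖ A (c + (t + 1)))
      = ∑ c : ZMod 3, Matrix.single c (c - 1) (m c) ⊗ₖ A (c + t) :=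
    (bh_master (fun c => c - 1) (fun c => c) m (fun _ => 1) _ _).trans
      (Finset.sum_congr rfl fun c _ => by
        rw [mul_one, one_mul, show c - 1 + (t + 1) = c + t by ring])
  have h4 : (∑ c : ZMod 3, Matrix.single c (c - 1) (m c) ⊗ₖ (1 : Matrix ι ι R)) *
      (∑ c : ZMod 3, Matrix.single c (c - 1) (m c) ⊗ₖ (1 : Matrix ι ι R))
      = ∑ c : ZMod 3, Matrix.single c (c - 2) (m c * m (c - 1)) ⊗ₖ (1 : Matrix ι ι R) :=
    (bh_master (fun c => c - 1) (fun c => c - 1) m m _ _).trans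
      (Finset.sum_congr rfl fun c _ => by
        rw [one_mul, show c - 1 - 1 = c - 2 by ring])
  have h5 : (∑ c : ZMod 3, Matrix.single c c (1 : R) ⊗ₖ (A (c + t) * A (c + (t + 1)))) *
      (∑ c : ZMod 3, Matrix.single c c (1 : R) ⊗ₖ A (c + (t + 2)))
      = f • 1 := by
    refine ((bh_master (fun c => c) (fun c => c) (fun _ => 1) (fun _ => 1) _ _).trans
      (Finset.sum_congr rfl fun c _ => by rw [mul_one, hA' c])).trans ?_
    rw [Finset.sum_congr rfl fun c _ => kronecker_smul f _ (1 : Matrix ι ι R),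
      ← Finset.smul_sum, bh_sumE1]
  have h6 : (∑ c : ZMod 3, Matrix.single c c (1 : R) ⊗ₖ (A (c + t) * A (c + (t + 1)))) *
      (∑ c : ZMod 3, Matrix.single c (c - 1) (m c) ⊗ₖ (1 : Matrix ι ι R))
      = ∑ c : ZMod 3, Matrix.single c (c - 1) (m c) ⊗ₖ (A (c + t) * A (c + (t + 1))) :=
    (bh_master (fun c => c) (fun c => c - 1) (fun _ => 1) m _ _).trans
      (Finset.sum_congr rfl fun c _ => by rw [one_mul, mul_one])
  have h7 : (∑ c : ZMod 3, Matrix.single c (c - 1) (m c) ⊗ₖ A (c + t)) *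
      (∑ c : ZMod 3, Matrix.single c c (1 : R) ⊗ₖ A (c + (t + 2)))
      = ∑ c : ZMod 3, Matrix.single c (c - 1) (m c) ⊗ₖ (A (c + t) * A (c + (t + 1))) :=
    (bh_master (fun c => c - 1) (fun c => c) m (fun _ => 1) _ _).trans
      (Finset.sum_congr rfl fun c _ => by
        rw [mul_one, show c - 1 + (t + 2) = c + (t + 1) by ring])
  have h8 : (∑ c : ZMod 3, Matrix.single c (c - 1) (m c) ⊗ₖ A (c + t)) *
      (∑ c : ZMod 3, Matrix.single c (c - 1) (m c) ⊗ₖ (1 : Matrix ι ι R))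
      = ∑ c : ZMod 3, Matrix.single c (c - 2) (m c * m (c - 1)) ⊗ₖ A (c + t) :=
    (bh_master (fun c => c - 1) (fun c => c - 1) m m _ _).trans
      (Finset.sum_congr rfl fun c _ => by
        rw [mul_one, show c - 1 - 1 = c - 2 by ring])
  have h9 : (∑ c : ZMod 3, Matrix.single c (c - 2) (m c * m (c - 1)) ⊗ₖ (1 : Matrix ι ι R)) *
      (∑ c : ZMod 3, Matrix.single c c (1 : R) ⊗ₖ A (c + (t + 2)))
      = ∑ c : ZMod 3, Matrix.single c (c - 2) (m c * m (c - 1)) ⊗ₖ A (c + t) :=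
    (bh_master (fun c => c - 2) (fun c => c) (fun c => m c * m (c - 1)) (fun _ => 1) _ _).trans
      (Finset.sum_congr rfl fun c _ => by
        rw [mul_one, one_mul, show c - 2 + (t + 2) = c + t by ring])
  have h10 : (∑ c : ZMod 3, Matrix.single c (c - 2) (m c * m (c - 1)) ⊗ₖ (1 : Matrix ι ι R)) *
      (∑ c : ZMod 3, Matrix.single c (c - 1) (m c) ⊗ₖ (1 : Matrix ι ι R))
      = (m 0 * m 1 * m 2) • 1 := by
    refine ((bh_master (fun c => c - 2) (fun c => c - 1) (fun c => m c * m (c - 1)) m _ _).trans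
      (Finset.sum_congr rfl fun c _ => by
        rw [one_mul, hm c, show c - 2 - 1 = c by
          have h3' : (3 : ZMod 3) = 0 := by decide
          linear_combination -h3'])).trans ?_
    exact bh_sum_smul_one _
  show ((∑ c : ZMod 3, Matrix.single c c (1 : R) ⊗ₖ A (c + t)) +
      w t • ∑ c : ZMod 3, Matrix.single c (c - 1) (m c) ⊗ₖ (1 : Matrix ι ι R)) *
      ((∑ c : ZMod 3, Matrix.single c c (1 : R) ⊗ₖ A (c + (t + 1))) +
      w (t + 1) • ∑ c : ZMod 3, Matrix.single c (c - 1) (m c) ⊗ₖ (1 : Matrix ι ι R)) *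
      ((∑ c : ZMod 3, Matrix.single c c (1 : R) ⊗ₖ A (c + (t + 2))) +
      w (t + 2) • ∑ c : ZMod 3, Matrix.single c (c - 1) (m c) ⊗ₖ (1 : Matrix ι ι R))
      = (f + m 0 * m 1 * m 2) • 1
  simp only [mul_add, add_mul, smul_mul_assoc, mul_smul_comm, smul_smul]
  rw [h1, h2, h3, h4, h5, h6, h7, h8, h9, h10]
  match_scalars
  · linear_combination (m 0 * m 1 * m 2) * hw3 t
  · linear_combination hw0 t
  · linear_combination hw2 t

lemma Cmat_hom (w m : ZMod 3 → MvPolynomial (Fin 6) ℂ)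
    (A : ZMod 3 → Matrix ι ι (MvPolynomial (Fin 6) ℂ))
    (hw : ∀ t, (w t).IsHomogeneous 0) (hm : ∀ c, (m c).IsHomogeneous 1)
    (hA : ∀ t i j, (A t i j).IsHomogeneous 1) :
    ∀ t x y, ((Cmat w m A t) x y).IsHomogeneous 1 := by
  rintro t ⟨p, i⟩ ⟨q, j⟩
  simp only [Cmat, Matrix.add_apply, Matrix.smul_apply, Matrix.sum_apply, kroneckerMap_apply,
    smul_eq_mul, Matrix.single, Matrix.of_apply, Matrix.one_apply]
  apply MvPolynomial.IsHomogeneous.add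
  · apply MvPolynomial.IsHomogeneous.sum
    intro c _
    split_ifs
    · rw [one_mul]; exact hA _ i j
    · rw [zero_mul]; exact MvPolynomial.isHomogeneous_zero _ _ _
  · have hsum : (∑ c : ZMod 3,
        (if c = p ∧ c - 1 = q then m c else 0) * (if i = j then (1 : MvPolynomial (Fin 6) ℂ) else 0)).IsHomogeneous 1 := by
      apply MvPolynomial.IsHomogeneous.sum
      intro c _
      split_ifs
      · rw [mul_one]; exact hm c
      · rw [mul_zero]; exact MvPolynomial.isHomogeneous_zero _ _ _
      · rw [zero_mul]; exact MvPolynomial.isHomogeneous_zero _ _ _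
      · rw [zero_mul]; exact MvPolynomial.isHomogeneous_zero _ _ _
    simpa using (hw t).mul hsum

end BHhelpers

theorem stmt_3 (f : MvPolynomial (Fin 6) ℂ)
    (ℓ : Fin 4 → Fin 3 → MvPolynomial (Fin 6) ℂ)
    (hlin : ∀ i j, (ℓ i j).IsHomogeneous 1)
    (hf : f = ∑ i : Fin 4, (ℓ i 0 * ℓ i 1 * ℓ i 2)) :
    ∃ A₁ A₂ A₃ : Matrix (Fin 27) (Fin 27) (MvPolynomial (Fin 6) ℂ),
      (∀ i j, (A₁ i j).IsHomogeneous 1) ∧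
      (∀ i j, (A₂ i j).IsHomogeneous 1) ∧
      (∀ i j, (A₃ i j).IsHomogeneous 1) ∧
      A₁ * A₂ * A₃ = f • (1 : Matrix (Fin 27) (Fin 27) (MvPolynomial (Fin 6) ℂ)) ∧
      A₂ * A₃ * A₁ = f • (1 : Matrix (Fin 27) (Fin 27) (MvPolynomial (Fin 6) ℂ)) ∧
      A₃ * A₁ * A₂ = f • (1 : Matrix (Fin 27) (Fin 27) (MvPolynomial (Fin 6) ℂ)) ∧
      A₁ * (A₂ * A₃) = f • (1 : Matrix (Fin 27) (Fin 27) (MvPolynomial (Fin 6) ℂ)) ∧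
      (A₂ * A₃) * A₁ = f • (1 : Matrix (Fin 27) (Fin 27) (MvPolynomial (Fin 6) ℂ)) := by
  classical
  -- the primitive cube root of unity, as a constant polynomial
  set x : MvPolynomial (Fin 6) ℂ := MvPolynomial.C ((-1 + Real.sqrt 3 * Complex.I) / 2) with hxdef
  have hωC : ((-1 + (Real.sqrt 3 : ℂ) * Complex.I) / 2) ^ 2
      + ((-1 + (Real.sqrt 3 : ℂ) * Complex.I) / 2) + 1 = 0 := by
    have h : ((Real.sqrt 3 : ℝ) : ℂ) ^ 2 = 3 := by
      rw [← Complex.ofReal_pow, Real.sq_sqrt (by norm_num : (0 : ℝ) ≤ 3)]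
      norm_num
    linear_combination (Complex.I ^ 2 / 4) * h + ((3 : ℂ) / 4) * Complex.I_sq
  have hx : x ^ 2 + x + 1 = 0 := by
    rw [hxdef, show (1 : MvPolynomial (Fin 6) ℂ) = MvPolynomial.C 1 from (map_one _).symm,
      ← map_pow, ← map_add, ← map_add, hωC, map_zero]
  -- the scalar weights
  set W : ZMod 3 → MvPolynomial (Fin 6) ℂ := fun t => x ^ t.val with hWdef
  have hW0 : ∀ t, W t + W (t + 1) + W (t + 2) = 0 := by
    intro t
    fin_cases t
    · show x ^ (0 : ZMod 3).val + x ^ ((0 : ZMod 3) + 1).val + x ^ ((0 : ZMod 3) + 2).val = 0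
      rw [show ((0 : ZMod 3)).val = 0 by decide, show ((0 : ZMod 3) + 1).val = 1 by decide,
        show ((0 : ZMod 3) + 2).val = 2 by decide]
      linear_combination hx
    · show x ^ (1 : ZMod 3).val + x ^ ((1 : ZMod 3) + 1).val + x ^ ((1 : ZMod 3) + 2).val = 0
      rw [show ((1 : ZMod 3)).val = 1 by decide, show ((1 : ZMod 3) + 1).val = 2 by decide,
        show ((1 : ZMod 3) + 2).val = 0 by decide]
      linear_combination hx
    · show x ^ (2 : ZMod 3).val + x ^ ((2 : ZMod 3) + 1).val + x ^ ((2 : ZMod 3) + 2).val = 0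
      rw [show ((2 : ZMod 3)).val = 2 by decide, show ((2 : ZMod 3) + 1).val = 0 by decide,
        show ((2 : ZMod 3) + 2).val = 1 by decide]
      linear_combination hx
  have hW2 : ∀ t, W t * W (t + 1) + (W t + W (t + 1)) * W (t + 2) = 0 := by
    intro t
    fin_cases t
    · show x ^ (0 : ZMod 3).val * x ^ ((0 : ZMod 3) + 1).val
        + (x ^ (0 : ZMod 3).val + x ^ ((0 : ZMod 3) + 1).val) * x ^ ((0 : ZMod 3) + 2).val = 0
      rw [show ((0 : ZMod 3)).val = 0 by decide, show ((0 : ZMod 3) + 1).val = 1 by decide,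
        show ((0 : ZMod 3) + 2).val = 2 by decide]
      linear_combination x * hx
    · show x ^ (1 : ZMod 3).val * x ^ ((1 : ZMod 3) + 1).val
        + (x ^ (1 : ZMod 3).val + x ^ ((1 : ZMod 3) + 1).val) * x ^ ((1 : ZMod 3) + 2).val = 0
      rw [show ((1 : ZMod 3)).val = 1 by decide, show ((1 : ZMod 3) + 1).val = 2 by decide,
        show ((1 : ZMod 3) + 2).val = 0 by decide]
      linear_combination x * hx
    · show x ^ (2 : ZMod 3).val * x ^ ((2 : ZMod 3) + 1).val
        + (x ^ (2 : ZMod 3).val + x ^ ((2 : ZMod 3) + 1).val) * x ^ ((2 : ZMod 3) + 2).val = 0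
      rw [show ((2 : ZMod 3)).val = 2 by decide, show ((2 : ZMod 3) + 1).val = 0 by decide,
        show ((2 : ZMod 3) + 2).val = 1 by decide]
      linear_combination x * hx
  have hW3 : ∀ t, W t * W (t + 1) * W (t + 2) = 1 := by
    intro t
    fin_cases t
    · show x ^ (0 : ZMod 3).val * x ^ ((0 : ZMod 3) + 1).val * x ^ ((0 : ZMod 3) + 2).val = 1
      rw [show ((0 : ZMod 3)).val = 0 by decide, show ((0 : ZMod 3) + 1).val = 1 by decide,
        show ((0 : ZMod 3) + 2).val = 2 by decide]
      linear_combination (x - 1) * hx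
    · show x ^ (1 : ZMod 3).val * x ^ ((1 : ZMod 3) + 1).val * x ^ ((1 : ZMod 3) + 2).val = 1
      rw [show ((1 : ZMod 3)).val = 1 by decide, show ((1 : ZMod 3) + 1).val = 2 by decide,
        show ((1 : ZMod 3) + 2).val = 0 by decide]
      linear_combination (x - 1) * hx
    · show x ^ (2 : ZMod 3).val * x ^ ((2 : ZMod 3) + 1).val * x ^ ((2 : ZMod 3) + 2).val = 1
      rw [show ((2 : ZMod 3)).val = 2 by decide, show ((2 : ZMod 3) + 1).val = 0 by decide,
        show ((2 : ZMod 3) + 2).val = 1 by decide]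
      linear_combination (x - 1) * hx
  have hWhom : ∀ t, (W t).IsHomogeneous 0 := by
    intro t
    simpa using (MvPolynomial.isHomogeneous_C (Fin 6) ((-1 + (Real.sqrt 3 : ℂ) * Complex.I) / 2)).pow t.val
  -- the linear forms, reindexed over ZMod 3
  set m : Fin 4 → ZMod 3 → MvPolynomial (Fin 6) ℂ :=
    fun i c => if c = 0 then ℓ i 0 else if c = 1 then ℓ i 1 else ℓ i 2 with hmdef
  have hmhom : ∀ i c, (m i c).IsHomogeneous 1 := by
    intro i c
    simp only [hmdef]
    split_ifs <;> apply hlin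
  have hmprod : ∀ i, m i 0 * m i 1 * m i 2 = ℓ i 0 * ℓ i 1 * ℓ i 2 := by
    intro i
    simp only [hmdef]
    rw [if_neg (by decide : ¬(1 : ZMod 3) = 0), if_neg (by decide : ¬(2 : ZMod 3) = 0),
      if_neg (by decide : ¬(2 : ZMod 3) = 1)]
    simp only [if_true]
  -- base matrices: 1×1
  set B0 : ZMod 3 → Matrix (Fin 1) (Fin 1) (MvPolynomial (Fin 6) ℂ) :=
    fun t => Matrix.of fun _ _ => m 0 t with hB0def
  have hmkey : ∀ t : ZMod 3, m 0 t * m 0 (t + 1) * m 0 (t + 2) = m 0 0 * m 0 1 * m 0 2 := by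
    intro t
    fin_cases t
    · show m 0 0 * m 0 (0 + 1) * m 0 (0 + 2) = _
      rw [show (0 : ZMod 3) + 1 = 1 by decide, show (0 : ZMod 3) + 2 = 2 by decide]
    · show m 0 1 * m 0 (1 + 1) * m 0 (1 + 2) = _
      rw [show (1 : ZMod 3) + 1 = 2 by decide, show (1 : ZMod 3) + 2 = 0 by decide]; ring
    · show m 0 2 * m 0 (2 + 1) * m 0 (2 + 2) = _
      rw [show (2 : ZMod 3) + 1 = 0 by decide, show (2 : ZMod 3) + 2 = 1 by decide]; ring
  have hB0 : ∀ t, B0 t * B0 (t + 1) * B0 (t + 2) = (m 0 0 * m 0 1 * m 0 2) • 1 := by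
    intro t
    refine Matrix.ext fun i j => ?_
    fin_cases i
    fin_cases j
    simp only [Matrix.mul_apply, Fin.sum_univ_one, hB0def, Matrix.of_apply,
      Matrix.smul_apply, Matrix.one_apply_eq, smul_eq_mul, mul_one]
    exact hmkey t
  have hB0hom : ∀ t i j, (B0 t i j).IsHomogeneous 1 := fun t i j => hmhom 0 t
  -- three applications of the construction
  set B1 := Cmat W (m 1) B0 with hB1def
  set B2 := Cmat W (m 2) B1 with hB2def
  set B3 := Cmat W (m 3) B2 with hB3def
  have hB1 : ∀ t, B1 t * B1 (t + 1) * B1 (t + 2)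
      = (m 0 0 * m 0 1 * m 0 2 + m 1 0 * m 1 1 * m 1 2) • 1 :=
    fun t => Cmat_mul W (m 1) _ B0 hB0 hW0 hW2 hW3 t
  have hB2 : ∀ t, B2 t * B2 (t + 1) * B2 (t + 2)
      = (m 0 0 * m 0 1 * m 0 2 + m 1 0 * m 1 1 * m 1 2 + m 2 0 * m 2 1 * m 2 2) • 1 :=
    fun t => Cmat_mul W (m 2) _ B1 hB1 hW0 hW2 hW3 t
  have hB3 : ∀ t, B3 t * B3 (t + 1) * B3 (t + 2)
      = (m 0 0 * m 0 1 * m 0 2 + m 1 0 * m 1 1 * m 1 2 + m 2 0 * m 2 1 * m 2 2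
          + m 3 0 * m 3 1 * m 3 2) • 1 :=
    fun t => Cmat_mul W (m 3) _ B2 hB2 hW0 hW2 hW3 t
  have hB3f : ∀ t, B3 t * B3 (t + 1) * B3 (t + 2) = f • 1 := by
    intro t
    rw [hB3 t, hmprod 0, hmprod 1, hmprod 2, hmprod 3, hf, Fin.sum_univ_four]
  have hB1hom : ∀ t i j, (B1 t i j).IsHomogeneous 1 :=
    Cmat_hom W (m 1) B0 hWhom (hmhom 1) hB0hom
  have hB2hom : ∀ t i j, (B2 t i j).IsHomogeneous 1 :=
    Cmat_hom W (m 2) B1 hWhom (hmhom 2) hB1hom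
  have hB3hom : ∀ t i j, (B3 t i j).IsHomogeneous 1 :=
    Cmat_hom W (m 3) B2 hWhom (hmhom 3) hB2hom
  -- reindexing to Fin 27
  have hcard : Fintype.card (ZMod 3 × (ZMod 3 × (ZMod 3 × Fin 1))) = 27 := by
    rw [Fintype.card_prod, Fintype.card_prod, Fintype.card_prod, ZMod.card, Fintype.card_fin]
  let e : (ZMod 3 × (ZMod 3 × (ZMod 3 × Fin 1))) ≃ Fin 27 := Fintype.equivFinOfCardEq hcard
  have key0 : B3 0 * B3 1 * B3 2 = f • 1 := by
    have h := hB3f 0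
    rw [show (0 : ZMod 3) + 1 = 1 by decide, show (0 : ZMod 3) + 2 = 2 by decide] at h
    exact h
  have key1 : B3 1 * B3 2 * B3 0 = f • 1 := by
    have h := hB3f 1
    rw [show (1 : ZMod 3) + 1 = 2 by decide, show (1 : ZMod 3) + 2 = 0 by decide] at h
    exact h
  have key2 : B3 2 * B3 0 * B3 1 = f • 1 := by
    have h := hB3f 2
    rw [show (2 : ZMod 3) + 1 = 0 by decide, show (2 : ZMod 3) + 2 = 1 by decide] at h
    exact h
  have hsub1 : (f • (1 : Matrix (ZMod 3 × (ZMod 3 × (ZMod 3 × Fin 1)))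
      (ZMod 3 × (ZMod 3 × (ZMod 3 × Fin 1))) (MvPolynomial (Fin 6) ℂ))).submatrix
      (⇑e.symm) (⇑e.symm) = f • (1 : Matrix (Fin 27) (Fin 27) (MvPolynomial (Fin 6) ℂ)) := by
    refine Matrix.ext fun i j => ?_
    simp [Matrix.submatrix_apply, Matrix.smul_apply, Matrix.one_apply]
  refine ⟨(B3 0).submatrix e.symm e.symm, (B3 1).submatrix e.symm e.symm,
    (B3 2).submatrix e.symm e.symm, fun i j => hB3hom 0 _ _, fun i j => hB3hom 1 _ _,
    fun i j => hB3hom 2 _ _, ?_, ?_, ?_, ?_, ?_⟩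
  · rw [Matrix.submatrix_mul_equiv, Matrix.submatrix_mul_equiv, key0, hsub1]
  · rw [Matrix.submatrix_mul_equiv, Matrix.submatrix_mul_equiv, key1, hsub1]
  · rw [Matrix.submatrix_mul_equiv, Matrix.submatrix_mul_equiv, key2, hsub1]
  · rw [← mul_assoc, Matrix.submatrix_mul_equiv, Matrix.submatrix_mul_equiv, key0, hsub1]
  · rw [Matrix.submatrix_mul_equiv, Matrix.submatrix_mul_equiv, key1, hsub1]
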